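/- Let n ≥ 1, let v : ℝⁿ → ℝⁿ be a continuously differentiable ℤⁿ-periodic vector field, let ρ : ℝⁿ → ℝ be twice continuously differentiable, ℤⁿ-periodic and everywhere strictly positive, let ε > 0, and set J := ρ·v − ε∇ρ. Assume div J(x) = 0 for all x (the stationary Fokker–Planck equation). Then ∫_{[0,1]ⁿ} ⟨v(x), J(x)⟩ dx = ∫_{[0,1]ⁿ} ‖J(x)‖²/ρ(x) dx; in particular ∫_{[0,1]ⁿ} ⟨v(x), J(x)⟩ dx ≥ 0, and this quantity equals 0 if and only if J vanishes identically. -/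

import Mathlib

open MeasureTheory

lemma fderiv_periodic_aux {n : ℕ} {F : Type*} [NormedAddCommGroup F] [NormedSpace ℝ F]
    (f : (Fin n → ℝ) → F) (hf : Differentiable ℝ f) (c : Fin n → ℝ)
    (hper : ∀ x, f (x + c) = f x) (x : Fin n → ℝ) :
    fderiv ℝ f (x + c) = fderiv ℝ f x := by
  have h1 : HasFDerivAt (fun y : Fin n → ℝ => y + c) (ContinuousLinearMap.id ℝ (Fin n → ℝ)) x :=
    (hasFDerivAt_id x).add_const c
  have h2 : HasFDerivAt (fun y => f (y + c)) ((fderiv ℝ f (x + c)).comp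
      (ContinuousLinearMap.id ℝ (Fin n → ℝ))) x := (hf (x + c)).hasFDerivAt.comp x h1
  have h3 : HasFDerivAt f (fderiv ℝ f (x + c)) x := by
    simpa [funext hper] using h2
  rw [h3.fderiv]


/-- For the stationary Fokker–Planck current `J = ρ·v − ε∇ρ` with
divergence zero and strictly positive periodic density `ρ`, one has
`∫ ⟨v, J⟩ = ∫ ‖J‖²/ρ ≥ 0`, with equality to `0` iff `J ≡ 0`. -/
theorem flux_positivity (n : ℕ) (hn : 1 ≤ n)
    (v : (Fin n → ℝ) → (Fin n → ℝ)) (hv : ContDiff ℝ 1 v)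
    (hvper : ∀ (x : Fin n → ℝ) (k : Fin n → ℤ), v (x + fun i => (k i : ℝ)) = v x)
    (ρ : (Fin n → ℝ) → ℝ) (hρ : ContDiff ℝ 2 ρ)
    (hρper : ∀ (x : Fin n → ℝ) (k : Fin n → ℤ), ρ (x + fun i => (k i : ℝ)) = ρ x)
    (hρpos : ∀ x : Fin n → ℝ, 0 < ρ x)
    (ε : ℝ) (hε : 0 < ε)
    (J : (Fin n → ℝ) → (Fin n → ℝ))
    (hJdef : ∀ (x : Fin n → ℝ) (i : Fin n),
      J x i = ρ x * v x i - ε * fderiv ℝ ρ x (Pi.single i 1))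
    (hdiv : ∀ x : Fin n → ℝ, ∑ i : Fin n, fderiv ℝ J x (Pi.single i 1) i = 0) :
    ((∫ x in Set.Icc (0 : Fin n → ℝ) 1, ∑ i : Fin n, v x i * J x i) =
        ∫ x in Set.Icc (0 : Fin n → ℝ) 1, (∑ i : Fin n, (J x i) ^ 2) / ρ x) ∧
    (0 ≤ ∫ x in Set.Icc (0 : Fin n → ℝ) 1, ∑ i : Fin n, v x i * J x i) ∧
    ((∫ x in Set.Icc (0 : Fin n → ℝ) 1, ∑ i : Fin n, v x i * J x i) = 0 ↔
      ∀ x : Fin n → ℝ, J x = 0) := by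
  obtain ⟨m, rfl⟩ : ∃ m, n = m + 1 := ⟨n - 1, (Nat.succ_pred_eq_of_pos hn).symm⟩
  -- basic regularity facts
  have hρ1 : ContDiff ℝ 1 ρ := hρ.of_le one_le_two
  have hρd : Differentiable ℝ ρ := hρ1.differentiable one_ne_zero
  have hρ' : Continuous (fderiv ℝ ρ) :=
    (hρ.fderiv_right (m := 1) (by norm_num)).continuous
  have hρne : ∀ x, ρ x ≠ 0 := fun x => (hρpos x).ne'
  have hJeq : J = fun x i => ρ x * v x i - ε * fderiv ℝ ρ x (Pi.single i 1) :=
    funext fun x => funext fun i => hJdef x i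
  have hJcd : ContDiff ℝ 1 J := by
    rw [hJeq]
    refine contDiff_pi.mpr fun i => (hρ1.mul (contDiff_pi.mp hv i)).sub
      (contDiff_const.mul ?_)
    exact ((hρ.fderiv_right (m := 1) (by norm_num)).clm_apply contDiff_const)
  have hJd : Differentiable ℝ J := hJcd.differentiable one_ne_zero
  have hJcont : Continuous J := hJcd.continuous
  have hvcont : Continuous v := hv.continuous
  have hρcont : Continuous ρ := hρ.continuous
  -- periodicity of J
  have hJper : ∀ (x : Fin (m+1) → ℝ) (k : Fin (m+1) → ℤ),
      J (x + fun i => (k i : ℝ)) = J x := by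
    intro x k
    funext i
    rw [hJdef, hJdef, hρper, hvper,
      fderiv_periodic_aux ρ hρd (fun i => (k i : ℝ)) (fun y => hρper y k) x]
  -- auxiliary functions
  set G : (Fin (m+1) → ℝ) → ℝ := fun x => ε * Real.log (ρ x) with hG
  set G' : (Fin (m+1) → ℝ) → (Fin (m+1) → ℝ) →L[ℝ] ℝ :=
    fun x => (ε / ρ x) • fderiv ℝ ρ x with hG'
  set F : (Fin (m+1) → ℝ) → (Fin (m+1) → ℝ) := fun x => G x • J x with hF
  set F' : (Fin (m+1) → ℝ) → (Fin (m+1) → ℝ) →L[ℝ] (Fin (m+1) → ℝ) :=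
    fun x => G x • fderiv ℝ J x + (G' x).smulRight (J x) with hF'
  have hGd : ∀ x, HasFDerivAt G (G' x) x := by
    intro x
    have h1 := ((hρd x).hasFDerivAt.log (hρne x)).const_mul ε
    have h2 : HasFDerivAt G ((ε * (ρ x)⁻¹) • fderiv ℝ ρ x) x := by
      simpa [smul_smul] using h1
    simp only [hG']
    rw [div_eq_mul_inv]
    exact h2
  have hFd : ∀ x, HasFDerivAt F (F' x) x := fun x =>
    (hGd x).smul (hJd x).hasFDerivAt
  -- pointwise divergence formula
  have hdivF : ∀ x, (∑ i, F' x (Pi.single i 1) i) =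
      (∑ i : Fin (m+1), v x i * J x i) - (∑ i : Fin (m+1), (J x i) ^ 2) / ρ x := by
    intro x
    have happ : ∀ i : Fin (m+1), F' x (Pi.single i 1) i =
        G x * fderiv ℝ J x (Pi.single i 1) i
          + (ε / ρ x * fderiv ℝ ρ x (Pi.single i 1)) * J x i := by
      intro i
      simp [hF', hG', ContinuousLinearMap.add_apply, ContinuousLinearMap.smul_apply,
        ContinuousLinearMap.smulRight_apply, Pi.add_apply, Pi.smul_apply, smul_eq_mul,
        mul_comm]
    rw [Finset.sum_congr rfl fun i _ => happ i, Finset.sum_add_distrib, ← Finset.mul_sum,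
      hdiv x, mul_zero, zero_add, Finset.sum_div, ← Finset.sum_sub_distrib]
    refine Finset.sum_congr rfl fun i _ => ?_
    have h1 : ε * fderiv ℝ ρ x (Pi.single i 1) = ρ x * v x i - J x i := by
      have := hJdef x i; linarith
    have h2 : ε / ρ x * fderiv ℝ ρ x (Pi.single i 1)
        = (ρ x * v x i - J x i) / ρ x := by
      rw [← h1]; ring
    rw [h2, div_mul_eq_mul_div]
    field_simp [hρne x]
  -- integrability facts
  have hI1 : IntegrableOn (fun x => ∑ i : Fin (m+1), v x i * J x i)
      (Set.Icc (0 : Fin (m+1) → ℝ) 1) := by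
    have hc : Continuous fun x => ∑ i : Fin (m+1), v x i * J x i :=
      continuous_finset_sum _ fun i _ =>
        ((continuous_apply i).comp hvcont).mul ((continuous_apply i).comp hJcont)
    exact hc.continuousOn.integrableOn_compact isCompact_Icc
  have hI2 : IntegrableOn (fun x => (∑ i : Fin (m+1), (J x i) ^ 2) / ρ x)
      (Set.Icc (0 : Fin (m+1) → ℝ) 1) := by
    have hc : Continuous fun x => (∑ i : Fin (m+1), (J x i) ^ 2) / ρ x :=
      (continuous_finset_sum _ fun i _ =>
        ((continuous_apply i).comp hJcont).pow 2).div hρcont hρne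
    exact hc.continuousOn.integrableOn_compact isCompact_Icc
  -- divergence theorem
  have hGcont : Continuous G := by
    refine continuous_const.mul ?_
    refine continuous_iff_continuousAt.mpr fun x => ?_
    exact (Real.continuousAt_log (hρne x)).comp hρcont.continuousAt
  have hDT := integral_divergence_of_hasFDerivAt_off_countable
    (0 : Fin (m+1) → ℝ) 1 (by intro i; norm_num) F F' ∅ Set.countable_empty
    (hGcont.smul hJcont).continuousOn (fun x _ => hFd x)
    (by
      have : (fun x => ∑ i, F' x (Pi.single i 1) i) = fun x =>
          (∑ i : Fin (m+1), v x i * J x i) - (∑ i : Fin (m+1), (J x i) ^ 2) / ρ x :=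
        funext hdivF
      rw [this]
      exact hI1.sub hI2)
  -- face terms vanish
  have hfaces : ∑ i : Fin (m+1),
      ((∫ x in Set.Icc ((0:Fin (m+1)→ℝ) ∘ i.succAbove) ((1:Fin (m+1)→ℝ) ∘ i.succAbove),
          F (i.insertNth ((1:Fin (m+1)→ℝ) i) x) i) -
        ∫ x in Set.Icc ((0:Fin (m+1)→ℝ) ∘ i.succAbove) ((1:Fin (m+1)→ℝ) ∘ i.succAbove),
          F (i.insertNth ((0:Fin (m+1)→ℝ) i) x) i) = 0 := by
    refine Finset.sum_eq_zero fun i _ => ?_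
    have hface : ∀ x : Fin m → ℝ,
        F (i.insertNth ((1:Fin (m+1)→ℝ) i) x) = F (i.insertNth ((0:Fin (m+1)→ℝ) i) x) := by
      intro x
      have harg : i.insertNth ((1:Fin (m+1)→ℝ) i) x =
          i.insertNth ((0:Fin (m+1)→ℝ) i) x
            + fun j => (((Pi.single i 1 : Fin (m+1) → ℤ) j : ℝ)) := by
        funext j
        rcases eq_or_ne j i with rfl | hj
        · simp
        · obtain ⟨k, rfl⟩ := Fin.exists_succAbove_eq hj
          simp [Fin.insertNth_apply_succAbove, Pi.single_eq_of_ne (Fin.succAbove_ne i k)]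
      rw [harg, hF]
      simp only [hG]
      rw [hρper _ (Pi.single i 1), hJper _ (Pi.single i 1)]
    simp only [hface, sub_self]
  rw [hfaces] at hDT
  have hkey : (∫ x in Set.Icc (0 : Fin (m+1) → ℝ) 1, ∑ i : Fin (m+1), v x i * J x i) =
      ∫ x in Set.Icc (0 : Fin (m+1) → ℝ) 1, (∑ i : Fin (m+1), (J x i) ^ 2) / ρ x := by
    have hsplit : (∫ x in Set.Icc (0 : Fin (m+1) → ℝ) 1,
        ((∑ i : Fin (m+1), v x i * J x i) - (∑ i : Fin (m+1), (J x i) ^ 2) / ρ x)) = 0 := by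
      have : (fun x => ∑ i, F' x (Pi.single i 1) i) = fun x =>
          (∑ i : Fin (m+1), v x i * J x i) - (∑ i : Fin (m+1), (J x i) ^ 2) / ρ x :=
        funext hdivF
      rw [← this]
      exact hDT
    rw [integral_sub hI1 hI2] at hsplit
    linarith
  have hnn : 0 ≤ ∫ x in Set.Icc (0 : Fin (m+1) → ℝ) 1, ∑ i : Fin (m+1), v x i * J x i := by
    rw [hkey]
    refine setIntegral_nonneg measurableSet_Icc fun x _ => ?_
    exact div_nonneg (Finset.sum_nonneg fun i _ => sq_nonneg _) (hρpos x).le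
  refine ⟨hkey, hnn, ?_, ?_⟩
  · -- zero integral implies J ≡ 0
    intro h0
    rw [hkey] at h0
    set q : (Fin (m+1) → ℝ) → ℝ := fun x => (∑ i : Fin (m+1), (J x i) ^ 2) / ρ x with hq
    have hqcont : Continuous q :=
      (continuous_finset_sum _ fun i _ =>
        ((continuous_apply i).comp hJcont).pow 2).div hρcont hρne
    have hq0 : q =ᵐ[volume.restrict (Set.Icc (0 : Fin (m+1) → ℝ) 1)] 0 := by
      rw [← setIntegral_eq_zero_iff_of_nonneg_ae]
      · exact h0
      · exact Filter.Eventually.of_forall fun x =>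
          div_nonneg (Finset.sum_nonneg fun i _ => sq_nonneg _) (hρpos x).le
      · exact hI2
    have hcl : Set.Icc (0 : Fin (m+1) → ℝ) 1 ⊆
        closure (interior (Set.Icc (0 : Fin (m+1) → ℝ) 1)) := by
      have : closure (interior (Set.Icc (0 : Fin (m+1) → ℝ) 1)) =
          Set.Icc (0 : Fin (m+1) → ℝ) 1 := by
        rw [← Set.pi_univ_Icc, interior_pi_set Set.finite_univ, closure_pi_set]
        have : ∀ i : Fin (m+1), closure (interior (Set.Icc ((0:Fin (m+1)→ℝ) i)
            ((1:Fin (m+1)→ℝ) i))) = Set.Icc ((0:Fin (m+1)→ℝ) i) ((1:Fin (m+1)→ℝ) i) := by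
          intro i
          rw [interior_Icc, closure_Ioo (by norm_num : (0:Fin (m+1)→ℝ) i ≠ (1:Fin (m+1)→ℝ) i)]
        simp only [this]
      rw [this]
    have hEq : Set.EqOn q 0 (Set.Icc (0 : Fin (m+1) → ℝ) 1) :=
      Measure.eqOn_of_ae_eq hq0 hqcont.continuousOn continuousOn_const hcl
    have hJIcc : ∀ x ∈ Set.Icc (0 : Fin (m+1) → ℝ) 1, J x = 0 := by
      intro x hx
      have hqx : q x = 0 := hEq hx
      have hsum : (∑ i : Fin (m+1), (J x i) ^ 2) = 0 := by
        rcases div_eq_zero_iff.mp hqx with h | h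
        · exact h
        · exact absurd h (hρne x)
      funext i
      have := (Finset.sum_eq_zero_iff_of_nonneg fun i _ => sq_nonneg (J x i)).mp hsum i
        (Finset.mem_univ i)
      exact pow_eq_zero_iff two_ne_zero |>.mp this
    intro x
    set y : Fin (m+1) → ℝ := fun i => Int.fract (x i) with hy
    have hyx : x = y + fun i => ((fun i => ⌊x i⌋) i : ℝ) := by
      funext i
      show x i = y i + ((⌊x i⌋ : ℤ) : ℝ)
      simp only [hy]
      exact (Int.fract_add_floor (x i)).symm
    have hymem : y ∈ Set.Icc (0 : Fin (m+1) → ℝ) 1 := by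
      constructor
      · intro i; exact Int.fract_nonneg _
      · intro i; exact (Int.fract_lt_one _).le
    rw [hyx, hJper y fun i => ⌊x i⌋]
    exact hJIcc y hymem
  · -- J ≡ 0 implies zero integral
    intro hz
    have h : ∀ x : Fin (m+1) → ℝ, (∑ i : Fin (m+1), v x i * J x i) = 0 := by
      intro x
      refine Finset.sum_eq_zero fun i _ => ?_
      have hJi : J x i = 0 := by rw [hz x]; rfl
      rw [hJi, mul_zero]
    simp only [h, integral_zero]
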